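/- For a non-null finite simple graph G and positive integers t ≤ n with n−t even, the shuriken graph Shu^t_n(G) is Eulerian if and only if t = n, |V(G)| is even, and (every vertex of G has even degree or n is odd). -/

import Mathlib

open SimpleGraph

/-- The (t,n)-shuriken graph of `G`: vertices are `n` copies of `V(G) ∪ {z}`,
encoded as `Fin n × Option V` (`(i, some x)` is `x_{i+1}`, `(i, none)` is `z_{i+1}`).
Adjacency (symmetrized, loops removed by `fromRel`):
(1) `u_i v_j` whenever `uv ∈ E(G)` (any copies);
(2) all pairs within copy `i` for `i ≤ t` (copy made complete);
(3) all pairs between copy `i` and copy `n+t+1-i` for `t+1 ≤ i ≤ (n+t)/2`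
    (0-indexed: `i + j = n + t - 1` with `t ≤ i`). -/
def shuriken {V : Type*} (G : SimpleGraph V) (n t : ℕ) :
    SimpleGraph (Fin n × Option V) :=
  SimpleGraph.fromRel (fun p q =>
    (∃ x y, p.2 = some x ∧ q.2 = some y ∧ G.Adj x y) ∨
    (p.1 = q.1 ∧ (p.1 : ℕ) < t) ∨
    (t ≤ (p.1 : ℕ) ∧ (p.1 : ℕ) + (q.1 : ℕ) = n + t - 1))

/-- A graph is Eulerian if it admits a closed Eulerian trail. -/
def IsEulerianGraph {α : Type*} [DecidableEq α] (G : SimpleGraph α) : Prop :=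
  ∃ (u : α) (w : G.Walk u u), w.IsEulerian

set_option linter.unusedSectionVars false
set_option maxHeartbeats 800000

namespace Euler

variable {α : Type*} [Fintype α] [DecidableEq α] {H : SimpleGraph α}

lemma exists_max_nat {P : ℕ → Prop} {N : ℕ} (h0 : ∃ n, P n) (hb : ∀ n, P n → n ≤ N) :
    ∃ n, P n ∧ ∀ m, P m → m ≤ n := by
  classical
  obtain ⟨m, hm⟩ := h0
  exact ⟨Nat.findGreatest P N, Nat.findGreatest_spec (hb m hm) hm,
    fun m' hm' => Nat.le_findGreatest (hb m' hm') hm'⟩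

lemma trail_length_le {u v : α} {p : H.Walk u v} (hp : p.IsTrail) :
    p.length ≤ Fintype.card (Sym2 α) := by
  rw [← Walk.length_edges]
  exact hp.edges_nodup.length_le_card

lemma IsTrail.concat' {u v w : α} {p : H.Walk u v} (hp : p.IsTrail) (h : H.Adj v w)
    (he : s(v, w) ∉ p.edges) : (p.concat h).IsTrail := by
  rw [Walk.isTrail_def, Walk.edges_concat, List.concat_eq_append, List.nodup_append]
  exact ⟨hp.edges_nodup, List.nodup_singleton _, by
    intro a ha b hb; simp at hb; subst hb; exact fun h => he (h ▸ ha)⟩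

/-- A maximal trail from `v` exists. -/
lemma exists_maximal_trail (H : SimpleGraph α) (v : α) :
    ∃ (w : α) (p : H.Walk v w), p.IsTrail ∧
      ∀ (x : α) (q : H.Walk v x), q.IsTrail → q.length ≤ p.length := by
  classical
  obtain ⟨k, ⟨w, p, hp, hk⟩, hmax⟩ := exists_max_nat (P := fun k =>
      ∃ (w : α) (p : H.Walk v w), p.IsTrail ∧ p.length = k)
    ⟨0, v, Walk.nil, Walk.IsTrail.nil, rfl⟩
    (fun k ⟨w, p, hp, hk⟩ => hk ▸ trail_length_le hp)
  exact ⟨w, p, hp, fun x q hq => hk ▸ hmax q.length ⟨x, q, hq, rfl⟩⟩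

/-- Count of edges of a trail incident to a vertex whose all incident edges lie in the trail. -/
lemma countP_eq_degree [DecidableRel H.Adj] {u w : α} {p : H.Walk u w} (hp : p.IsTrail)
    (hall : ∀ y, H.Adj w y → s(w, y) ∈ p.edges) :
    p.edges.countP (fun e => w ∈ e) = H.degree w := by
  classical
  rw [← card_incidenceFinset_eq_degree]
  rw [List.countP_eq_length_filter]
  have hnd : (p.edges.filter (fun e => w ∈ e)).Nodup := hp.edges_nodup.filter _
  rw [← List.toFinset_card_of_nodup hnd]
  congr 1
  ext e
  simp only [List.mem_toFinset, List.mem_filter, SimpleGraph.mem_incidenceFinset,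
    decide_eq_true_eq]
  constructor
  · rintro ⟨he, hwe⟩
    exact ⟨p.edges_subset_edgeSet he, hwe⟩
  · rintro ⟨heE, hwe⟩
    have := Sym2.other_spec hwe
    have hadj : H.Adj w (Sym2.Mem.other hwe) := by
      rw [← SimpleGraph.mem_edgeSet, this]; exact heE
    refine ⟨?_, hwe⟩
    rw [← this]
    exact hall _ hadj

/-- A non-extendable trail in an even graph is closed. -/
lemma maximal_trail_closed (hdeg : ∀ x, Even (Nat.card (H.neighborSet x)))
    {u w : α} {p : H.Walk u w} (hp : p.IsTrail)
    (hall : ∀ y, H.Adj w y → s(w, y) ∈ p.edges) : u = w := by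
  classical
  by_contra hne
  have h1 : ¬ Even (p.edges.countP (fun e => w ∈ e)) := by
    rw [hp.even_countP_edges_iff w]
    intro h
    exact (h hne).2 rfl
  rw [countP_eq_degree hp hall] at h1
  apply h1
  have := hdeg w
  rwa [Nat.card_eq_fintype_card, SimpleGraph.card_neighborSet_eq_degree] at this

set_option linter.unusedSectionVars false

/-- From a vertex with an incident edge, in an even graph there's a nonempty closed trail. -/
lemma exists_closed_trail (hdeg : ∀ x, Even (Nat.card (H.neighborSet x))) {a b : α}
    (hab : H.Adj a b) : ∃ p : H.Walk a a, p.IsTrail ∧ 1 ≤ p.length := by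
  obtain ⟨w, p, hp, hmax⟩ := exists_maximal_trail H a
  have hall : ∀ y, H.Adj w y → s(w, y) ∈ p.edges := by
    intro y hy
    by_contra hne
    have := hmax y (p.concat hy) (IsTrail.concat' hp hy hne)
    simp [Walk.length_concat] at this
  obtain rfl : a = w := maximal_trail_closed hdeg hp hall
  refine ⟨p, hp, ?_⟩
  have := hmax b (Walk.cons hab Walk.nil) (by simp [Walk.isTrail_def])
  simpa using this

lemma countP_eq_card_filter [DecidableRel H.Adj] {a : α} {q : H.Walk a a} (hq : q.IsTrail) (x : α) :
    q.edges.countP (fun e => x ∈ e) =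
      ((Finset.univ : Finset α).filter
        (fun y => H.Adj x y ∧ s(x, y) ∈ q.edges)).card := by
  classical
  rw [List.countP_eq_length_filter]
  have hnd : (q.edges.filter (fun e => x ∈ e)).Nodup := hq.edges_nodup.filter _
  rw [← List.toFinset_card_of_nodup hnd]
  refine (Finset.card_bij (fun y _ => s(x, y)) ?_ ?_ ?_).symm
  · intro y hy
    simp only [Finset.mem_filter, Finset.mem_univ, true_and] at hy
    simp only [List.mem_toFinset, List.mem_filter, decide_eq_true_eq]
    exact ⟨hy.2, Sym2.mem_mk_left _ _⟩
  · intro y₁ h₁ y₂ h₂ hee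
    rwa [Sym2.congr_right] at hee
  · intro e he
    simp only [List.mem_toFinset, List.mem_filter, decide_eq_true_eq] at he
    have hxe : x ∈ e := he.2
    have hsp := Sym2.other_spec hxe
    have hadj : H.Adj x (Sym2.Mem.other hxe) := by
      rw [← SimpleGraph.mem_edgeSet, hsp]
      exact q.edges_subset_edgeSet he.1
    refine ⟨Sym2.Mem.other hxe, ?_, hsp⟩
    simp only [Finset.mem_filter, Finset.mem_univ, true_and]
    exact ⟨hadj, by rw [hsp]; exact he.1⟩

lemma even_countP_closed {a : α} {q : H.Walk a a} (hq : q.IsTrail) (x : α) :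
    Even (q.edges.countP (fun e => x ∈ e)) := by
  rw [hq.even_countP_edges_iff x]
  intro h; exact absurd rfl h

lemma even_degree_deleteEdges (hdeg : ∀ x, Even (Nat.card (H.neighborSet x))) {a : α}
    {q : H.Walk a a} (hq : q.IsTrail) (x : α) :
    Even (Nat.card ((H.deleteEdges {e | e ∈ q.edges}).neighborSet x)) := by
  classical
  have hcard : ∀ (G : SimpleGraph α) (x : α), Nat.card (G.neighborSet x) =
      ((Finset.univ : Finset α).filter (fun y => G.Adj x y)).card := by
    intro G x
    rw [Nat.card_coe_set_eq, Set.ncard_eq_toFinset_card']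
    congr 1
    ext y
    simp [SimpleGraph.neighborSet]
    exact Set.mem_toFinset
  rw [hcard]
  have hsplit :
      ((Finset.univ : Finset α).filter (fun y => H.Adj x y ∧ s(x, y) ∈ q.edges)).card +
      ((Finset.univ : Finset α).filter
        (fun y => (H.deleteEdges {e | e ∈ q.edges}).Adj x y)).card =
      ((Finset.univ : Finset α).filter (fun y => H.Adj x y)).card := by
    have e1 : ((Finset.univ : Finset α).filter (fun y => H.Adj x y ∧ s(x, y) ∈ q.edges)) =
        ((Finset.univ : Finset α).filter (fun y => H.Adj x y)).filter
          (fun y => s(x, y) ∈ q.edges) := by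
      rw [Finset.filter_filter]
    have e2 : ((Finset.univ : Finset α).filter
          (fun y => (H.deleteEdges {e | e ∈ q.edges}).Adj x y)) =
        ((Finset.univ : Finset α).filter (fun y => H.Adj x y)).filter
          (fun y => ¬ s(x, y) ∈ q.edges) := by
      rw [Finset.filter_filter]
      ext y
      simp [SimpleGraph.deleteEdges_adj]
    rw [e1, e2]
    exact Finset.card_filter_add_card_filter_not _
  have h1 : Even (((Finset.univ : Finset α).filter
      (fun y => H.Adj x y ∧ s(x, y) ∈ q.edges)).card) := by
    rw [← countP_eq_card_filter hq x]
    exact even_countP_closed hq x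
  have h2 := hdeg x
  rw [hcard] at h2
  rw [← hsplit] at h2
  rcases h1 with ⟨c, hc⟩
  rcases h2 with ⟨d, hd⟩
  refine ⟨d - c, ?_⟩
  refine Eq.trans ?_ (show ((Finset.univ : Finset α).filter
      (fun y => (H.deleteEdges {e | e ∈ q.edges}).Adj x y)).card = (d - c) + (d - c) by omega)
  congr 1
  ext y
  simp only [Finset.mem_filter]

theorem exists_isEulerian (H : SimpleGraph α) (hdeg : ∀ x, Even (Nat.card (H.neighborSet x)))
    (hconn : H.Preconnected) (hne : H.edgeSet.Nonempty) :
    ∃ (u : α) (p : H.Walk u u), p.IsEulerian := by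
  classical
  obtain ⟨e₀, he₀⟩ := hne
  induction e₀ with
  | _ x₀ y₀ =>
  rw [SimpleGraph.mem_edgeSet] at he₀
  obtain ⟨p₀, hp₀, hl₀⟩ := exists_closed_trail hdeg he₀
  obtain ⟨k, ⟨u, p, hp, hk⟩, hmax⟩ := exists_max_nat
    (P := fun k => ∃ (u : α) (p : H.Walk u u), p.IsTrail ∧ p.length = k)
    ⟨p₀.length, x₀, p₀, hp₀, rfl⟩
    (fun k hk => by obtain ⟨u, p, hp, rfl⟩ := hk; exact trail_length_le hp)
  subst hk
  refine ⟨u, p, (p.isEulerian_iff).mpr ⟨hp, ?_⟩⟩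
  by_contra hmiss
  push_neg at hmiss
  obtain ⟨e, heE, hep⟩ := hmiss
  -- find a vertex on p with an unused incident edge
  have key : ∃ a, a ∈ p.support ∧ ∃ b, H.Adj a b ∧ s(a, b) ∉ p.edges := by
    by_contra hno
    push_neg at hno
    have walkfalse : ∀ (m : ℕ) (z : α) (q : H.Walk z u), q.length ≤ m →
        z ∉ p.support → False := by
      intro m
      induction m with
      | zero =>
        intro z q hq hz
        cases q with
        | nil => exact hz p.start_mem_support
        | cons h q' => simp [Walk.length_cons] at hq
      | succ m ih =>
        intro z q hq hz
        cases q with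
        | nil => exact hz p.start_mem_support
        | @cons _ z' _ h q' =>
          by_cases hz' : z' ∈ p.support
          · exact hz (p.snd_mem_support_of_mem_edges (hno z' hz' z h.symm))
          · refine ih z' q' ?_ hz'
            simp only [Walk.length_cons] at hq
            omega
    induction e with
    | _ x y =>
    rw [SimpleGraph.mem_edgeSet] at heE
    have hx : x ∉ p.support := fun hx => hep (hno x hx y heE)
    exact walkfalse (hconn x u).some.length x (hconn x u).some le_rfl hx
  obtain ⟨a, ha, b, hab, hnab⟩ := key
  set q : H.Walk a a := p.rotate a ha with hqdef
  have hq : q.IsTrail := hp.rotate ha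
  have hqe : q.edges ~r p.edges := p.rotate_edges a ha
  have hql : q.length = p.length := by
    rw [← Walk.length_edges, ← Walk.length_edges]
    exact hqe.perm.length_eq
  have hnab' : s(a, b) ∉ q.edges := fun h => hnab (hqe.perm.mem_iff.mp h)
  set H' := H.deleteEdges {e | e ∈ q.edges} with hH'
  have hd' : ∀ x, Even (Nat.card (H'.neighborSet x)) := even_degree_deleteEdges hdeg hq
  have hab' : H'.Adj a b := by
    rw [hH', SimpleGraph.deleteEdges_adj]
    exact ⟨hab, hnab'⟩
  obtain ⟨r, hr, hrl⟩ := exists_closed_trail hd' hab'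
  have hre : ∀ e ∈ r.edges, e ∈ H.edgeSet := by
    intro e he
    have := r.edges_subset_edgeSet he
    rw [hH', SimpleGraph.edgeSet_deleteEdges] at this
    exact this.1
  set r' : H.Walk a a := r.transfer H hre with hr'def
  have hr'e : r'.edges = r.edges := r.edges_transfer hre
  have hr't : r'.IsTrail := by
    rw [Walk.isTrail_def, hr'e]
    exact hr.edges_nodup
  have hdisj : ∀ e ∈ r'.edges, e ∉ q.edges := by
    intro e he
    rw [hr'e] at he
    have := r.edges_subset_edgeSet he
    rw [hH', SimpleGraph.edgeSet_deleteEdges] at this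
    exact this.2
  have hc : (q.append r').IsTrail := by
    rw [Walk.isTrail_def, Walk.edges_append, List.nodup_append]
    exact ⟨hq.edges_nodup, hr't.edges_nodup, fun e he e' he' hee => hdisj e' he' (hee ▸ he)⟩
  have hlen := hmax (q.append r').length ⟨a, q.append r', hc, rfl⟩
  rw [Walk.length_append, hql] at hlen
  have : 1 ≤ r'.length := by
    rwa [← Walk.length_edges, hr'e, Walk.length_edges]
  omega

end Euler


namespace ShurikenAux

variable {V : Type*} [Fintype V] [DecidableEq V] (G : SimpleGraph V)

lemma eulerian_even_deg {α : Type*} [Fintype α] [DecidableEq α] {H : SimpleGraph α}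
    (h : IsEulerianGraph H) : ∀ v, Even (Nat.card (H.neighborSet v)) := by
  classical
  obtain ⟨u, w, hw⟩ := h
  intro v
  rw [Nat.card_eq_fintype_card, SimpleGraph.card_neighborSet_eq_degree, hw.even_degree_iff]
  intro h'
  exact absurd rfl h'



lemma shuriken_adj {n t : ℕ} (p q : Fin n × Option V) :
    (shuriken G n t).Adj p q ↔ p ≠ q ∧
      ((∃ x y, p.2 = some x ∧ q.2 = some y ∧ G.Adj x y) ∨
       (∃ x y, q.2 = some x ∧ p.2 = some y ∧ G.Adj x y) ∨
       (p.1 = q.1 ∧ (p.1 : ℕ) < t) ∨ (q.1 = p.1 ∧ (q.1 : ℕ) < t) ∨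
       (t ≤ (p.1 : ℕ) ∧ (p.1 : ℕ) + (q.1 : ℕ) = n + t - 1) ∨
       (t ≤ (q.1 : ℕ) ∧ (q.1 : ℕ) + (p.1 : ℕ) = n + t - 1)) := by
  show (SimpleGraph.fromRel _).Adj p q ↔ _
  rw [SimpleGraph.fromRel_adj]
  constructor
  · rintro ⟨hne, (hA | hB | hC) | (hA' | hB' | hC')⟩
    · exact ⟨hne, Or.inl hA⟩
    · exact ⟨hne, Or.inr (Or.inr (Or.inl hB))⟩
    · exact ⟨hne, Or.inr (Or.inr (Or.inr (Or.inr (Or.inl hC))))⟩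
    · exact ⟨hne, Or.inr (Or.inl hA')⟩
    · exact ⟨hne, Or.inr (Or.inr (Or.inr (Or.inl hB')))⟩
    · exact ⟨hne, Or.inr (Or.inr (Or.inr (Or.inr (Or.inr hC'))))⟩
  · rintro ⟨hne, hA | hA' | hB | hB' | hC | hC'⟩
    · exact ⟨hne, Or.inl (Or.inl hA)⟩
    · exact ⟨hne, Or.inr (Or.inl hA')⟩
    · exact ⟨hne, Or.inl (Or.inr (Or.inl hB))⟩
    · exact ⟨hne, Or.inr (Or.inr (Or.inl hB'))⟩
    · exact ⟨hne, Or.inl (Or.inr (Or.inr hC))⟩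
    · exact ⟨hne, Or.inr (Or.inr (Or.inr hC'))⟩

lemma ncard_neighbor_z0 {n t : ℕ} (ht : 1 ≤ t) (h0 : 0 < n) :
    Nat.card ((shuriken G n t).neighborSet (⟨0, h0⟩, none)) = Fintype.card V := by
  have hset : (shuriken G n t).neighborSet (⟨0, h0⟩, none) =
      (fun x : V => ((⟨0, h0⟩ : Fin n), (some x : Option V))) '' Set.univ := by
    ext ⟨j, b⟩
    simp only [SimpleGraph.mem_neighborSet, shuriken_adj, Set.mem_image, Set.mem_univ, true_and,
      Prod.mk.injEq]
    constructor
    · rintro ⟨hne, h⟩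
      have hj : j = ⟨0, h0⟩ := by
        rcases h with ⟨x, y, hx, -⟩ | ⟨x, y, -, hy, -⟩ | ⟨h1, -⟩ | ⟨h1, -⟩ | ⟨h1, h2⟩ | ⟨h1, h2⟩
        · exact absurd hx (by simp)
        · exact absurd hy (by simp)
        · exact h1.symm
        · exact h1
        · exfalso; simp at h1; omega
        · exfalso; have := j.isLt; simp at h2; omega
      subst hj
      cases b with
      | none => exact absurd rfl hne
      | some x => exact ⟨x, rfl, rfl⟩
    · rintro ⟨x, rfl, rfl⟩
      refine ⟨by simp, Or.inr (Or.inr (Or.inl ⟨rfl, ?_⟩))⟩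
      exact ht
  rw [hset, Nat.card_coe_set_eq, Set.ncard_image_of_injective _ (fun a b h => by
    simpa using h), Set.ncard_univ, Nat.card_eq_fintype_card]

lemma ncard_neighbor_zt {n t : ℕ} (ht : 1 ≤ t) (h2 : t + 2 ≤ n) (htn : t < n) :
    Nat.card ((shuriken G n t).neighborSet (⟨t, htn⟩, none)) = Fintype.card V + 1 := by
  have hn1 : n - 1 < n := by omega
  have hset : (shuriken G n t).neighborSet (⟨t, htn⟩, none) =
      (fun b : Option V => ((⟨n - 1, hn1⟩ : Fin n), b)) '' Set.univ := by
    ext ⟨j, b⟩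
    simp only [SimpleGraph.mem_neighborSet, shuriken_adj, Set.mem_image, Set.mem_univ, true_and,
      Prod.mk.injEq]
    constructor
    · rintro ⟨hne, h⟩
      have hj : j = ⟨n - 1, hn1⟩ := by
        rcases h with ⟨x, y, hx, -⟩ | ⟨x, y, -, hy, -⟩ | ⟨h1, hlt⟩ | ⟨h1, hlt⟩ | ⟨h1, hj⟩ | ⟨h1, hj⟩
        · exact absurd hx (by simp)
        · exact absurd hy (by simp)
        · exact absurd hlt (lt_irrefl t)
        · exfalso; subst h1; exact absurd hlt (lt_irrefl t)
        · refine Fin.ext ?_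
          show (j : ℕ) = n - 1
          have hj2 : t + (j : ℕ) = n + t - 1 := by simpa using hj
          omega
        · refine Fin.ext ?_
          show (j : ℕ) = n - 1
          have hj2 : (j : ℕ) + t = n + t - 1 := by simpa using hj
          omega
      exact ⟨b, hj.symm ▸ rfl, rfl⟩
    · rintro ⟨b', rfl, rfl⟩
      constructor
      · intro hcon
        rw [Prod.mk.injEq] at hcon
        have := congrArg Fin.val hcon.1
        simp at this; omega
      · refine Or.inr (Or.inr (Or.inr (Or.inr (Or.inl ⟨le_rfl, ?_⟩))))
        show t + (n - 1) = n + t - 1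
        omega
  rw [hset, Nat.card_coe_set_eq, Set.ncard_image_of_injective _ (fun a b h => by
    simpa using h), Set.ncard_univ, Nat.card_eq_fintype_card, Fintype.card_option]

lemma ncard_neighbor_none {n : ℕ} (i : Fin n) :
    Nat.card ((shuriken G n n).neighborSet (i, none)) = Fintype.card V := by
  have hset : (shuriken G n n).neighborSet (i, none) =
      (fun x : V => (i, (some x : Option V))) '' Set.univ := by
    ext ⟨j, b⟩
    simp only [SimpleGraph.mem_neighborSet, shuriken_adj, Set.mem_image, Set.mem_univ, true_and,
      Prod.mk.injEq]
    constructor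
    · rintro ⟨hne, h⟩
      have hj : j = i := by
        rcases h with ⟨x, y, hx, -⟩ | ⟨x, y, -, hy, -⟩ | ⟨h1, -⟩ | ⟨h1, -⟩ | ⟨h1, -⟩ | ⟨h1, -⟩
        · exact absurd hx (by simp)
        · exact absurd hy (by simp)
        · exact h1.symm
        · exact h1
        · exfalso; have := i.isLt; omega
        · exfalso; have := j.isLt; omega
      subst hj
      cases b with
      | none => exact absurd rfl hne
      | some x => exact ⟨x, rfl, rfl⟩
    · rintro ⟨x, rfl, rfl⟩
      exact ⟨by simp, Or.inr (Or.inr (Or.inl ⟨rfl, i.isLt⟩))⟩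
  rw [hset, Nat.card_coe_set_eq, Set.ncard_image_of_injective _ (fun a b h => by
    simpa using h), Set.ncard_univ, Nat.card_eq_fintype_card]

lemma ncard_neighbor_some {n : ℕ} (i : Fin n) (x : V) :
    Nat.card ((shuriken G n n).neighborSet (i, some x)) =
      Fintype.card V + (n - 1) * Nat.card (G.neighborSet x) := by
  have hset : (shuriken G n n).neighborSet (i, some x) =
      ((fun b : Option V => (i, b)) '' ({some x}ᶜ)) ∪
      ((fun p : Fin n × V => (p.1, (some p.2 : Option V))) ''
        (({i}ᶜ : Set (Fin n)) ×ˢ G.neighborSet x)) := by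
    ext ⟨j, b⟩
    simp only [SimpleGraph.mem_neighborSet, shuriken_adj, Set.mem_union, Set.mem_image,
      Set.mem_compl_iff, Set.mem_singleton_iff, Set.mem_prod, SimpleGraph.mem_neighborSet,
      Prod.mk.injEq, Prod.exists]
    constructor
    · rintro ⟨hne, h⟩
      rcases h with ⟨x', y, hx', hy, hadj⟩ | ⟨x', y, hx', hy, hadj⟩ | ⟨h1, -⟩ | ⟨h1, -⟩ |
        ⟨h1, -⟩ | ⟨h1, -⟩
      · obtain rfl : x = x' := by simpa using hx'
        subst hy
        by_cases hji : j = i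
        · subst hji
          exact Or.inl ⟨some y, by simpa using (G.ne_of_adj hadj).symm, rfl, rfl⟩
        · exact Or.inr ⟨j, y, ⟨hji, hadj⟩, rfl, rfl⟩
      · obtain rfl : x = y := by simpa using hy
        subst hx'
        by_cases hji : j = i
        · subst hji
          exact Or.inl ⟨some x', by simpa using G.ne_of_adj hadj, rfl, rfl⟩
        · exact Or.inr ⟨j, x', ⟨hji, hadj.symm⟩, rfl, rfl⟩
      · subst h1
        refine Or.inl ⟨b, ?_, rfl, rfl⟩
        intro hcon; subst hcon; exact hne rfl
      · subst h1
        refine Or.inl ⟨b, ?_, rfl, rfl⟩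
        intro hcon; subst hcon; exact hne rfl
      · exfalso; have := i.isLt; omega
      · exfalso; have := j.isLt; omega
    · rintro (⟨b', hb', rfl, rfl⟩ | ⟨j', y, ⟨hj', hy⟩, rfl, rfl⟩)
      · refine ⟨?_, Or.inr (Or.inr (Or.inl ⟨rfl, i.isLt⟩))⟩
        intro hcon
        rw [Prod.mk.injEq] at hcon
        exact hb' hcon.2.symm
      · refine ⟨?_, Or.inl ⟨x, y, rfl, rfl, hy⟩⟩
        intro hcon
        rw [Prod.mk.injEq] at hcon
        exact hj' hcon.1.symm
  rw [hset, Nat.card_coe_set_eq, Set.ncard_union_eq ?disj (Set.toFinite _) (Set.toFinite _)]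
  case disj =>
    rw [Set.disjoint_left]
    rintro ⟨j, b⟩ h1 h2
    obtain ⟨b', -, hb⟩ := h1
    obtain ⟨⟨j', y⟩, hmem, hj⟩ := h2
    rw [Prod.mk.injEq] at hb hj
    have hj'i : j' ∈ ({i}ᶜ : Set (Fin n)) := hmem.1
    have e1 : j' = j := hj.1
    have e2 : i = j := hb.1
    exact hj'i (show j' ∈ ({i} : Set (Fin n)) by
      rw [Set.mem_singleton_iff, e1, ← e2])
  have h1 : ((fun b : Option V => (i, b)) '' ({some x}ᶜ)).ncard = Fintype.card V := by
    rw [Set.ncard_image_of_injective _ (fun a b h => by simpa using h)]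
    have := Set.ncard_add_ncard_compl ({some x} : Set (Option V)) (Set.toFinite _)
      (Set.toFinite _)
    rw [Set.ncard_singleton, Nat.card_eq_fintype_card, Fintype.card_option] at this
    omega
  have h2 : ((fun p : Fin n × V => (p.1, (some p.2 : Option V))) ''
      (({i}ᶜ : Set (Fin n)) ×ˢ G.neighborSet x)).ncard =
      (n - 1) * Nat.card (G.neighborSet x) := by
    rw [Set.ncard_image_of_injective _ (fun a b h => by
      rw [Prod.mk.injEq] at h
      exact Prod.ext h.1 (by simpa using h.2))]
    rw [← Nat.card_coe_set_eq, Nat.card_congr (Equiv.Set.prod _ _), Nat.card_prod]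
    congr 1
    rw [Nat.card_coe_set_eq]
    have := Set.ncard_add_ncard_compl ({i} : Set (Fin n)) (Set.toFinite _) (Set.toFinite _)
    rw [Set.ncard_singleton, Nat.card_eq_fintype_card, Fintype.card_fin] at this
    omega
  rw [h1, h2]

lemma shuriken_preconnected {n : ℕ} (hn : 1 ≤ n) {x₀ y₀ : V} (hxy : G.Adj x₀ y₀) :
    (shuriken G n n).Preconnected := by
  have hsame : ∀ (i : Fin n) (b : Option V), b ≠ none → (shuriken G n n).Adj (i, b) (i, none) := by
    intro i b hb
    rw [shuriken_adj]
    exact ⟨by simp [Prod.ext_iff, hb], Or.inr (Or.inr (Or.inl ⟨rfl, i.isLt⟩))⟩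
  have hz : ∀ i j : Fin n, (shuriken G n n).Reachable (i, none) (j, none) := by
    intro i j
    by_cases hij : i = j
    · subst hij; rfl
    · have a1 := (hsame i (some x₀) (by simp)).symm
      have a2 : (shuriken G n n).Adj (i, some x₀) (j, some y₀) := by
        rw [shuriken_adj]
        exact ⟨by simp [Prod.ext_iff, hij], Or.inl ⟨x₀, y₀, rfl, rfl, hxy⟩⟩
      have a3 := hsame j (some y₀) (by simp)
      exact ((a1.toWalk.append a2.toWalk).append a3.toWalk).reachable
  intro p q
  have h1 : (shuriken G n n).Reachable p (p.1, none) := by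
    rcases hp : p.2 with _ | b
    · rw [← hp]
    · exact (hsame p.1 p.2 (by simp [hp])).toWalk.reachable
  have h2 : (shuriken G n n).Reachable q (q.1, none) := by
    rcases hq : q.2 with _ | b
    · rw [← hq]
    · exact (hsame q.1 q.2 (by simp [hq])).toWalk.reachable
  exact (h1.trans (hz p.1 q.1)).trans h2.symm

end ShurikenAux


theorem shuriken_isEulerian_iff {V : Type*} [Fintype V] [DecidableEq V] (G : SimpleGraph V)
    (hG : G.edgeSet.Nonempty)
    (n t : ℕ) (ht : 1 ≤ t) (htn : t ≤ n) (hev : Even (n - t)) :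
    IsEulerianGraph (shuriken G n t) ↔
      t = n ∧ Even (Fintype.card V) ∧
        ((∀ x : V, Even (Nat.card (G.neighborSet x))) ∨ Odd n) := by
  classical
  have h0 : 0 < n := lt_of_lt_of_le ht htn
  obtain ⟨⟨x₀, y₀⟩, hxy⟩ : ∃ p : V × V, G.Adj p.1 p.2 := by
    obtain ⟨e, he⟩ := hG
    induction e with
    | _ x y => exact ⟨(x, y), he⟩
  constructor
  · intro h
    have hdeg := ShurikenAux.eulerian_even_deg h
    have hV : Even (Fintype.card V) := by
      have := hdeg (⟨0, h0⟩, none)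
      rwa [ShurikenAux.ncard_neighbor_z0 G ht h0] at this
    have hteqn : t = n := by
      by_contra hne
      have htn' : t < n := lt_of_le_of_ne htn hne
      have h2 : t + 2 ≤ n := by
        obtain ⟨c, hc⟩ := hev
        omega
      have := hdeg (⟨t, htn'⟩, none)
      rw [ShurikenAux.ncard_neighbor_zt G ht h2 htn', Nat.even_add_one] at this
      exact this hV
    subst hteqn
    refine ⟨rfl, hV, ?_⟩
    rcases Nat.even_or_odd t with hn | hn
    · left
      intro x
      have := hdeg (⟨0, h0⟩, some x)
      rw [ShurikenAux.ncard_neighbor_some] at this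
      have hprod : Even ((t - 1) * Nat.card (G.neighborSet x)) :=
        (Nat.even_add.mp this).mp hV
      rcases Nat.even_mul.mp hprod with hc | hc
      · exfalso
        obtain ⟨a, ha⟩ := hn
        obtain ⟨b, hb⟩ := hc
        omega
      · exact hc
    · exact Or.inr hn
  · rintro ⟨rfl, hV, hor⟩
    have hprod : ∀ x : V, Even ((t - 1) * Nat.card (G.neighborSet x)) := by
      intro x
      rcases hor with hall | hodd
      · exact Nat.even_mul.mpr (Or.inr (hall x))
      · exact Nat.even_mul.mpr (Or.inl (Nat.Odd.sub_odd hodd odd_one))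
    obtain ⟨u, p, hp⟩ := Euler.exists_isEulerian (shuriken G t t)
      (by
        rintro ⟨i, _ | x⟩
        · rw [ShurikenAux.ncard_neighbor_none]
          exact hV
        · rw [ShurikenAux.ncard_neighbor_some]
          exact Nat.even_add.mpr (iff_of_true hV (hprod x)))
      (ShurikenAux.shuriken_preconnected G ht hxy)
      ⟨s(((⟨0, h0⟩ : Fin t), (none : Option V)), ((⟨0, h0⟩ : Fin t), some x₀)), by
        rw [SimpleGraph.mem_edgeSet, ShurikenAux.shuriken_adj]
        exact ⟨by simp, Or.inr (Or.inr (Or.inl ⟨rfl, ht⟩))⟩⟩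
    exact ⟨u, p, hp⟩
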